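/- Let a_1 ≥ 1, b ≥ 1, a_2 ≥ 0, and let w be any binary word of length a_1 + b + a_2 - 2 containing exactly a_1 + a_2 - 2 ones (so a_1 + a_2 ≥ 2). Then 3·(value of 1^{a_1} 0^b 1^{a_2}) < 4·(value of 11 w), where both words have length a_1 + b + a_2. -/

import Mathlib

/-- Base-2 value of a binary word (most significant bit first). -/
def val (w : List Bool) : ℕ :=
  w.foldl (fun n b => 2 * n + b.toNat) 0

lemma val_aux (w : List Bool) (n : ℕ) :
    w.foldl (fun n b => 2 * n + b.toNat) n = n * 2 ^ w.length + val w := by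
  induction w generalizing n with
  | nil => simp [val]
  | cons a t ih =>
    have h2 : val (a :: t) = a.toNat * 2 ^ t.length + val t := by
      simp only [val, List.foldl_cons]
      rw [ih]; ring_nf; simp only [val]; ring_nf
    simp only [List.foldl_cons, List.length_cons, h2]
    rw [ih]; ring

lemma val_lt (w : List Bool) : val w < 2 ^ w.length := by
  induction w with
  | nil => simp [val]
  | cons a t ih =>
    have h2 : val (a :: t) = a.toNat * 2 ^ t.length + val t := by
      simp only [val, List.foldl_cons]
      rw [val_aux]; ring_nf; simp only [val]; ring_nf
    rw [h2, List.length_cons, pow_succ]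
    have : a.toNat ≤ 1 := Bool.toNat_le a
    nlinarith

theorem stmt15 (a1 b a2 : ℕ) (ha1 : 1 ≤ a1) (hb : 1 ≤ b) (ha : 2 ≤ a1 + a2)
    (w : List Bool) (hl : w.length = a1 + b + a2 - 2) (hc : w.count true = a1 + a2 - 2) :
    3 * val (List.replicate a1 true ++ List.replicate b false ++ List.replicate a2 true) <
      4 * val ([true, true] ++ w) := by
  have hval : val ([true, true] ++ w) = 3 * 2 ^ w.length + val w := by
    simp only [val, List.foldl_cons, List.foldl_append]
    have := val_aux w 3
    simpa [val] using this
  set L := List.replicate a1 true ++ List.replicate b false ++ List.replicate a2 true with hL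
  obtain ⟨n, hn2⟩ : ∃ n, a1 + b + a2 = n + 2 := ⟨a1 + b + a2 - 2, by omega⟩
  have hwl : w.length = n := by omega
  have hLlen : L.length = n + 2 := by simp [hL]; omega
  have h1 : val L < 2 ^ (n + 2) := hLlen ▸ val_lt L
  have h2 : (2 : ℕ) ^ (n + 2) = 4 * 2 ^ n := by rw [pow_add]; ring
  rw [hval, hwl]
  nlinarith
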